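/- Let μ : V → V be a linear operator on a subspace V of Hermitian n×n matrices that is trace-preserving (tr(μ(Q)) = tr(Q) for all Q ∈ V), and let Q₀ ∈ V with tr(Q₀) = 1. If there is c with tr(μ^t(Q₀)²) ≤ c for all t, then the limit Q̃ = lim_{t→∞} (1/t)·∑_{k=0}^{t-1} μ^k(Q₀) exists, satisfies μ(Q̃) = Q̃ and tr(Q̃) = 1. -/

import Mathlib

set_option maxHeartbeats 1000000

open Filter Matrix

section AuxSection

attribute [local instance] Matrix.normedAddCommGroup Matrix.normedSpace

/-- Mean ergodic lemma: a linear endomorphism of a finite-dimensional real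
normed space whose orbit of `x` is bounded has convergent Cesàro averages at
`x`, and the limit is a fixed point. -/
theorem cesaro_fix_of_bounded_orbit {E : Type*} [NormedAddCommGroup E]
    [NormedSpace ℝ E] [FiniteDimensional ℝ E] (f : E →ₗ[ℝ] E) (x : E)
    (hb : ∃ C : ℝ, ∀ t : ℕ, ‖(f ^ t) x‖ ≤ C) :
    ∃ q : E, Tendsto (fun t : ℕ => (t : ℝ)⁻¹ • ∑ k ∈ Finset.range t, (f ^ k) x)
      atTop (nhds q) ∧ f q = q := by
  classical
  set W : Submodule ℝ E := Submodule.span ℝ (Set.range fun k : ℕ => (f ^ k) x) with hWdef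
  have hgen : ∀ k : ℕ, (f ^ k) x ∈ W := fun k => Submodule.subset_span ⟨k, rfl⟩
  have hxW : x ∈ W := by simpa using hgen 0
  have hmaps : ∀ w ∈ W, f w ∈ W := by
    intro w hw
    induction hw using Submodule.span_induction with
    | mem z hz =>
        obtain ⟨k, rfl⟩ := hz
        have : f ((f ^ k) x) = (f ^ (k + 1)) x := by
          rw [pow_succ']; rfl
        rw [this]; exact hgen (k + 1)
    | zero => simpa using W.zero_mem
    | add a b _ _ ha hb => rw [map_add]; exact W.add_mem ha hb
    | smul a z _ hz => rw [LinearMap.map_smul]; exact W.smul_mem a hz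
  -- bounded orbits for every element of W
  have horb : ∀ w ∈ W, ∃ C : ℝ, ∀ t : ℕ, ‖(f ^ t) w‖ ≤ C := by
    intro w hw
    induction hw using Submodule.span_induction with
    | mem z hz =>
        obtain ⟨k, rfl⟩ := hz
        obtain ⟨C, hC⟩ := hb
        refine ⟨C, fun t => ?_⟩
        have : (f ^ t) ((f ^ k) x) = (f ^ (t + k)) x := by
          rw [pow_add]; rfl
        rw [this]; exact hC _
    | zero => exact ⟨0, fun t => by simp⟩
    | add a b _ _ ha hb' =>
        obtain ⟨C₁, h₁⟩ := ha; obtain ⟨C₂, h₂⟩ := hb'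
        refine ⟨C₁ + C₂, fun t => ?_⟩
        rw [map_add]
        exact (norm_add_le _ _).trans (add_le_add (h₁ t) (h₂ t))
    | smul a z _ hz =>
        obtain ⟨C, hC⟩ := hz
        refine ⟨|a| * C, fun t => ?_⟩
        rw [LinearMap.map_smul, norm_smul, Real.norm_eq_abs]
        exact mul_le_mul_of_nonneg_left (hC t) (abs_nonneg a)
  set g : W →ₗ[ℝ] W := f.restrict hmaps with hgdef
  have hgpow : ∀ (k : ℕ) (w : W), (((g ^ k) w : W) : E) = (f ^ k) (w : E) := by
    intro k
    induction k with
    | zero => intro w; rfl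
    | succ k ih =>
        intro w
        have h1 : (g ^ (k + 1)) w = g ((g ^ k) w) := by rw [pow_succ']; rfl
        have h2 : (f ^ (k + 1)) (w : E) = f ((f ^ k) (w : E)) := by rw [pow_succ']; rfl
        rw [h1, h2, ← ih w]
        exact LinearMap.restrict_coe_apply _ _ _
  -- telescoping identity
  have htel : ∀ (y : W) (t : ℕ),
      ∑ k ∈ Finset.range t, (g ^ k) ((g - 1) y) = (g ^ t) y - y := by
    intro y t
    have : ∀ k : ℕ, (g ^ k) ((g - 1) y) = (g ^ (k + 1)) y - (g ^ k) y := by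
      intro k
      have : (g - 1) y = g y - y := by simp [LinearMap.sub_apply]
      rw [this, map_sub]
      simp [pow_succ, Module.End.mul_apply]
    simp_rw [this]
    simpa using Finset.sum_range_sub (fun k => (g ^ k) y) t
  -- disjointness of ker and range of (g - 1)
  have hdisj : Disjoint (LinearMap.ker (g - 1)) (LinearMap.range (g - 1)) := by
    rw [Submodule.disjoint_def]
    intro w hker hran
    obtain ⟨y, rfl⟩ := hran
    have hfix : g ((g - 1) y) = (g - 1) y := by
      have := LinearMap.mem_ker.mp hker
      have h2 : g ((g - 1) y) - (g - 1) y = 0 := by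
        simpa [LinearMap.sub_apply] using this
      linear_combination (norm := module) h2
    set w := (g - 1) y with hw
    have hfixk : ∀ k : ℕ, (g ^ k) w = w := by
      intro k
      induction k with
      | zero => rfl
      | succ k ih =>
          have : (g ^ (k + 1)) w = g ((g ^ k) w) := by rw [pow_succ']; rfl
          rw [this, ih, hfix]
    have hkey : ∀ t : ℕ, (t : ℕ) • w = (g ^ t) y - y := by
      intro t
      calc (t : ℕ) • w = ∑ k ∈ Finset.range t, (g ^ k) w := by
            simp [hfixk]
        _ = (g ^ t) y - y := htel y t
    obtain ⟨C, hC⟩ := horb (y : E) y.2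
    have hnorm : ∀ t : ℕ, 1 ≤ t → ‖(w : E)‖ ≤ (t : ℝ)⁻¹ * (C + ‖(y : E)‖) := by
      intro t ht
      have ht0 : (0 : ℝ) < (t : ℝ) := by exact_mod_cast ht
      have h1 : (t : ℝ) • (w : E) = (f ^ t) (y : E) - (y : E) := by
        have h0 := congrArg (fun z : W => (z : E)) (hkey t)
        simp only [Submodule.coe_smul_of_tower, Submodule.coe_sub] at h0
        rw [← Nat.cast_smul_eq_nsmul ℝ] at h0
        rw [h0, hgpow]
      have h2 : ‖(t : ℝ) • (w : E)‖ ≤ C + ‖(y : E)‖ := by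
        rw [h1]
        exact (norm_sub_le _ _).trans (add_le_add (hC t) le_rfl)
      have h3 : (t : ℝ) * ‖(w : E)‖ ≤ C + ‖(y : E)‖ := by
        rwa [norm_smul, Real.norm_eq_abs, abs_of_pos ht0] at h2
      have h5 := mul_le_mul_of_nonneg_left h3 (le_of_lt (inv_pos.mpr ht0))
      rwa [← mul_assoc, inv_mul_cancel₀ (ne_of_gt ht0), one_mul] at h5
    have hlim : Tendsto (fun t : ℕ => (t : ℝ)⁻¹ * (C + ‖(y : E)‖)) atTop (nhds 0) := by
      simpa using (tendsto_inv_atTop_nhds_zero_nat (𝕜 := ℝ)).mul_const (C + ‖(y : E)‖)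
    have hle : ‖(w : E)‖ ≤ 0 :=
      ge_of_tendsto hlim (eventually_atTop.mpr ⟨1, fun t ht => hnorm t ht⟩)
    have : (w : E) = 0 := norm_le_zero_iff.mp hle
    exact Subtype.ext this
  -- the decomposition is all of W
  have hsup : LinearMap.ker (g - 1) ⊔ LinearMap.range (g - 1) = ⊤ := by
    apply Submodule.eq_top_of_disjoint
    · rw [add_comm]
      exact (LinearMap.finrank_range_add_finrank_ker (g - 1)).ge
    · exact hdisj
  obtain ⟨q, hqker, r, hrran, hqr⟩ :=
    Submodule.mem_sup.mp (by rw [hsup]; trivial :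
      (⟨x, hxW⟩ : W) ∈ LinearMap.ker (g - 1) ⊔ LinearMap.range (g - 1))
  obtain ⟨y, rfl⟩ := hrran
  have hfixq : g q = q := by
    have := LinearMap.mem_ker.mp hqker
    have h2 : g q - q = 0 := by simpa [LinearMap.sub_apply] using this
    linear_combination (norm := module) h2
  have hfixqk : ∀ k : ℕ, (g ^ k) q = q := by
    intro k
    induction k with
    | zero => rfl
    | succ k ih =>
        have : (g ^ (k + 1)) q = g ((g ^ k) q) := by rw [pow_succ']; rfl
        rw [this, ih, hfixq]
  refine ⟨(q : E), ?_, ?_⟩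
  · -- convergence of Cesàro averages
    obtain ⟨C, hC⟩ := horb (y : E) y.2
    have hkey : ∀ t : ℕ, ∑ k ∈ Finset.range t, (f ^ k) x
        = (t : ℕ) • (q : E) + ((f ^ t) (y : E) - (y : E)) := by
      intro t
      have hx' : x = (q : E) + (((g - 1) y : W) : E) := by
        have := congrArg (fun z : W => (z : E)) hqr
        simpa using this.symm
      have : ∑ k ∈ Finset.range t, (f ^ k) x
          = ∑ k ∈ Finset.range t, (((g ^ k) q : W) : E)
            + ∑ k ∈ Finset.range t, (((g ^ k) ((g - 1) y) : W) : E) := by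
        rw [← Finset.sum_add_distrib]
        refine Finset.sum_congr rfl fun k _ => ?_
        rw [hx', map_add, hgpow, hgpow]
      rw [this]
      congr 1
      · simp [hfixqk]
      · rw [← Submodule.coe_sum, htel y t, Submodule.coe_sub, hgpow t y]
    have heq : ∀ t : ℕ, 1 ≤ t →
        (t : ℝ)⁻¹ • ∑ k ∈ Finset.range t, (f ^ k) x
          = (q : E) + (t : ℝ)⁻¹ • ((f ^ t) (y : E) - (y : E)) := by
      intro t ht
      have ht0 : ((t : ℝ)) ≠ 0 := by positivity
      rw [hkey t, smul_add, ← Nat.cast_smul_eq_nsmul ℝ, smul_smul, inv_mul_cancel₀ ht0, one_smul]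
    have hlim2 : Tendsto (fun t : ℕ => (t : ℝ)⁻¹ * (C + ‖(y : E)‖)) atTop (nhds 0) := by
      simpa using (tendsto_inv_atTop_nhds_zero_nat (𝕜 := ℝ)).mul_const (C + ‖(y : E)‖)
    have hzero : Tendsto (fun t : ℕ => (t : ℝ)⁻¹ • ((f ^ t) (y : E) - (y : E)))
        atTop (nhds 0) := by
      refine squeeze_zero_norm (fun t => ?_) hlim2
      rw [norm_smul, Real.norm_eq_abs, abs_of_nonneg (by positivity)]
      exact mul_le_mul_of_nonneg_left
        ((norm_sub_le _ _).trans (add_le_add (hC t) le_rfl)) (by positivity)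
    have : Tendsto (fun t : ℕ => (q : E) + (t : ℝ)⁻¹ • ((f ^ t) (y : E) - (y : E)))
        atTop (nhds ((q : E) + 0)) := tendsto_const_nhds.add hzero
    rw [add_zero] at this
    refine this.congr' ?_ |>.congr (fun t => rfl)
    exact (eventually_atTop.mpr ⟨1, fun t ht => (heq t ht).symm⟩)
  · have h1 : ((g q : W) : E) = f (q : E) := LinearMap.restrict_coe_apply _ _ _
    rw [← h1, hfixq]

/-- Stationary limit densities of bounded quantum predictor models: a
trace-preserving linear operator on a subspace of Hermitian matrices whose
orbit of a generalized density Q₀ is bounded (in the Hilbert-Schmidt sense)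
has converging Cesàro averages; the limit is a fixed point of trace 1. -/
theorem stationary_limit_density {n : ℕ}
    (V : Submodule ℝ (Matrix (Fin n) (Fin n) ℂ))
    (hherm : ∀ Q ∈ V, Q.IsHermitian)
    (μ : Matrix (Fin n) (Fin n) ℂ →ₗ[ℝ] Matrix (Fin n) (Fin n) ℂ)
    (hmapsto : ∀ Q ∈ V, μ Q ∈ V)
    (htr : ∀ Q ∈ V, (μ Q).trace = Q.trace)
    (Q₀ : Matrix (Fin n) (Fin n) ℂ) (hQ₀ : Q₀ ∈ V) (hQ₀tr : Q₀.trace = 1)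
    (hbdd : ∃ c : ℝ, ∀ t : ℕ, (((μ ^ t) Q₀ ^ 2).trace).re ≤ c) :
    ∃ Qlim : Matrix (Fin n) (Fin n) ℂ,
      Tendsto (fun t : ℕ => (t : ℝ)⁻¹ • ∑ k ∈ Finset.range t, (μ ^ k) Q₀)
        atTop (nhds Qlim) ∧ μ Qlim = Qlim ∧ Qlim.trace = 1 := by
  classical
  have hmem : ∀ t : ℕ, (μ ^ t) Q₀ ∈ V := by
    intro t
    induction t with
    | zero => simpa using hQ₀
    | succ t ih =>
        have : (μ ^ (t + 1)) Q₀ = μ ((μ ^ t) Q₀) := by rw [pow_succ']; rfl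
        rw [this]; exact hmapsto _ ih
  -- boundedness of the orbit in the sup norm
  obtain ⟨c, hc⟩ := hbdd
  have hb : ∃ C : ℝ, ∀ t : ℕ, ‖(μ ^ t) Q₀‖ ≤ C := by
    refine ⟨Real.sqrt c, fun t => ?_⟩
    set A := (μ ^ t) Q₀ with hA
    have hAh : A.IsHermitian := hherm _ (hmem t)
    have htrace : ((A ^ 2).trace).re = ∑ i, ∑ j, Complex.normSq (A i j) := by
      have h1 : (A ^ 2).trace = ∑ i, ∑ j, A i j * A j i := by
        simp [Matrix.trace, Matrix.diag, pow_two, Matrix.mul_apply]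
      have h2 : ∀ i j, A i j * A j i = (Complex.normSq (A i j) : ℂ) := by
        intro i j
        have := hAh.apply j i  -- star (A i j) = A j i
        rw [← this]
        exact Complex.mul_conj (A i j)
      rw [h1]
      simp_rw [h2]
      push_cast
      simp
    have hsum : ∑ i, ∑ j, Complex.normSq (A i j) ≤ c := by rw [← htrace]; exact hc t
    have hentry : ∀ i j, ‖A i j‖ ≤ Real.sqrt c := by
      intro i j
      have h1 : Complex.normSq (A i j) ≤ c := by
        calc Complex.normSq (A i j)
            ≤ ∑ j', Complex.normSq (A i j') :=
              Finset.single_le_sum (fun j' _ => Complex.normSq_nonneg _) (Finset.mem_univ j)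
          _ ≤ ∑ i', ∑ j', Complex.normSq (A i' j') :=
              Finset.single_le_sum
                (fun i' _ => Finset.sum_nonneg (fun j' _ => Complex.normSq_nonneg _))
                (Finset.mem_univ i)
          _ ≤ c := hsum
      have h2 : ‖A i j‖ ^ 2 ≤ c := by rwa [← Complex.sq_norm] at h1
      exact Real.le_sqrt_of_sq_le h2
    exact (Matrix.norm_le_iff (Real.sqrt_nonneg c)).mpr hentry
  obtain ⟨Qlim, hconv, hfix⟩ := cesaro_fix_of_bounded_orbit μ Q₀ hb
  refine ⟨Qlim, hconv, hfix, ?_⟩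
  -- trace of the limit
  have htrt : ∀ t : ℕ, ((μ ^ t) Q₀).trace = 1 := by
    intro t
    induction t with
    | zero => simpa using hQ₀tr
    | succ t ih =>
        have h1 : (μ ^ (t + 1)) Q₀ = μ ((μ ^ t) Q₀) := by rw [pow_succ']; rfl
        rw [h1, htr _ (hmem t), ih]
  have hcont : Tendsto
      (fun t : ℕ => ((t : ℝ)⁻¹ • ∑ k ∈ Finset.range t, (μ ^ k) Q₀).trace)
      atTop (nhds Qlim.trace) :=
    ((continuous_id.matrix_trace).tendsto Qlim).comp hconv
  have heq : ∀ t : ℕ, 1 ≤ t →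
      ((t : ℝ)⁻¹ • ∑ k ∈ Finset.range t, (μ ^ k) Q₀).trace = 1 := by
    intro t ht
    have ht0 : ((t : ℝ)) ≠ 0 := by positivity
    rw [Matrix.trace_smul, Matrix.trace_sum]
    simp_rw [htrt]
    rw [Finset.sum_const, Finset.card_range, nsmul_eq_mul, mul_one]
    rw [Complex.real_smul]
    have ht0' : ((t : ℝ) : ℂ) ≠ 0 := by exact_mod_cast ht0
    field_simp
    have htn : t ≠ 0 := by omega
    simp [htn]
  have : Tendsto (fun _ : ℕ => (1 : ℂ)) atTop (nhds Qlim.trace) := by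
    refine hcont.congr' ?_
    exact eventually_atTop.mpr ⟨1, fun t ht => heq t ht⟩
  exact tendsto_nhds_unique this tendsto_const_nhds

end AuxSection
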